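/- Let Λ be a nonzero real number and M a real symmetric positive definite 3×3 matrix with tr(√M) = |Λ|. For a real symmetric 3×3 matrix N let G_M(N) denote the unique real symmetric 3×3 matrix G satisfying G·M^{-1/2} + M^{-1/2}·G = -M⁻¹·N·M⁻¹, and set ⟨P,Q⟩ := -tr(G_M(P)·Q). Then: (i) G_M(M) = -(1/2)·M^{-1/2}; (ii) ⟨M,M⟩ = |Λ|/2; and (iii) for every real symmetric 3×3 matrix N, the matrix N - (1/|Λ|)·tr(M^{-1/2}·N)·M is ⟨·,·⟩-orthogonal to M, i.e. it equals the orthogonal projection of N away from the span of M in the inner product ⟨·,·⟩. -/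

import Mathlib

open Matrix

section

open scoped ComplexOrder

/-- The positive semidefinite square root of a positive semidefinite matrix, as defined in
Mathlib (Dec 2024) under the name `Matrix.PosSemidef.sqrt` (since removed). -/
noncomputable def Matrix.PosSemidef.sqrt {n 𝕜 : Type*} [RCLike 𝕜] [Fintype n] [DecidableEq n]
    {A : Matrix n n 𝕜} (hA : A.PosSemidef) : Matrix n n 𝕜 :=
  hA.1.eigenvectorUnitary.1 * diagonal ((↑) ∘ (√·) ∘ hA.1.eigenvalues) *
    (star hA.1.eigenvectorUnitary : Matrix n n 𝕜)

end

lemma Matrix.PosSemidef.sqrt_mul_self {m : Type*} [Fintype m] [DecidableEq m]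
    {A : Matrix m m ℝ} (hA : A.PosSemidef) : hA.sqrt * hA.sqrt = A := by
  have hU : (star hA.1.eigenvectorUnitary : Matrix m m ℝ) * hA.1.eigenvectorUnitary.1 = 1 :=
    Unitary.coe_star_mul_self _
  conv_rhs => rw [hA.1.spectral_theorem, Unitary.conjStarAlgAut_apply]
  simp only [Matrix.PosSemidef.sqrt]
  rw [show ∀ a b c d e : Matrix m m ℝ, a * b * c * (d * b * e) = a * (b * (c * d) * b) * e by
    intros; simp only [Matrix.mul_assoc], hU, Matrix.mul_one, diagonal_mul_diagonal]
  congr 2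
  ext i j
  by_cases h : i = j <;> simp [diagonal_apply, h, Real.mul_self_sqrt (hA.eigenvalues_nonneg j)]

lemma Matrix.PosSemidef.posSemidef_sqrt {m : Type*} [Fintype m] [DecidableEq m]
    {A : Matrix m m ℝ} (hA : A.PosSemidef) : hA.sqrt.PosSemidef := by
  have hD : (diagonal ((↑) ∘ (√·) ∘ hA.1.eigenvalues) : Matrix m m ℝ).PosSemidef :=
    posSemidef_diagonal_iff.mpr (fun i => by simp [Real.sqrt_nonneg])
  unfold Matrix.PosSemidef.sqrt
  rw [Matrix.star_eq_conjTranspose]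
  exact hD.mul_mul_conjTranspose_same _

lemma tr_sq_zero {m : Type*} [Fintype m] [DecidableEq m]
    (A : Matrix m m ℝ) (h : (Aᵀ * A).trace = 0) : A = 0 := by
  simp only [Matrix.trace, Matrix.diag, Matrix.mul_apply, Matrix.transpose_apply] at h
  ext i j
  have h0 : ∀ p ∈ Finset.univ (α := m), (0:ℝ) ≤ ∑ q, A q p * A q p :=
    fun p _ => Finset.sum_nonneg fun q _ => mul_self_nonneg _
  have h1 := (Finset.sum_eq_zero_iff_of_nonneg h0).1 h j (Finset.mem_univ _)
  have h2 : ∀ q ∈ Finset.univ (α := m), (0:ℝ) ≤ A q j * A q j :=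
    fun q _ => mul_self_nonneg _
  have := (Finset.sum_eq_zero_iff_of_nonneg h2).1 h1 i (Finset.mem_univ _)
  simpa [mul_self_eq_zero] using this

lemma sylvester_unique {m : Type*} [Fintype m] [DecidableEq m]
    {A D : Matrix m m ℝ} (hA : A.PosSemidef) (hdet : A.det ≠ 0)
    (hD : D.IsHermitian) (h : D * A + A * D = 0) : D = 0 := by
  set T := hA.sqrt with hT
  have hTT : T * T = A := hA.sqrt_mul_self
  have hTsym : Tᵀ = T := by
    have := hA.posSemidef_sqrt.1
    simpa [Matrix.IsHermitian] using this
  have hDsym : Dᵀ = D := by simpa [Matrix.IsHermitian] using hD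
  have hdetT : T.det ≠ 0 := by
    intro h0
    apply hdet
    rw [← hTT, Matrix.det_mul, h0, mul_zero]
  have hDA : D * A = -(A * D) := by linear_combination (norm := noncomm_ring) h
  have key : ((D * T)ᵀ * (D * T)).trace = 0 := by
    have e1 : ((D * T)ᵀ * (D * T)).trace = (D * D * A).trace := by
      rw [Matrix.transpose_mul, hTsym, hDsym, ← hTT,
        show T * D * (D * T) = T * (D * D * T) by noncomm_ring,
        Matrix.trace_mul_comm,
        show D * D * T * T = D * D * (T * T) by noncomm_ring]
    have c1 : (D * A * D).trace = (D * D * A).trace := by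
      rw [Matrix.trace_mul_cycle]
    have c2 : (D * A * D).trace = -((D * D * A).trace) := by
      rw [hDA, neg_mul, Matrix.trace_neg, Matrix.mul_assoc,
        Matrix.trace_mul_comm]
    rw [e1]; linarith
  have hz : D * T = 0 := tr_sq_zero _ key
  calc D = D * T * T⁻¹ := by
        rw [Matrix.mul_assoc, Matrix.mul_nonsing_inv _ hdetT.isUnit, mul_one]
    _ = 0 := by rw [hz, Matrix.zero_mul]

/-- Let `Λ ≠ 0` and let `M` be real symmetric positive
definite (3×3) with `tr(√M) = |Λ|`.  For symmetric `N`, `G N` denotes the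
unique symmetric solution of `G·M^{-1/2} + M^{-1/2}·G = -M⁻¹·N·M⁻¹` (taken as
hypothesis `hG`), and `⟨P,Q⟩ := -tr(G(P)·Q)`.  Then:
(i) `G M = -(1/2)·M^{-1/2}`;
(ii) `⟨M,M⟩ = |Λ|/2`;
(iii) for every symmetric `N`, the matrix `N - (1/|Λ|)·tr(M^{-1/2}·N)·M` is
`⟨·,·⟩`-orthogonal to `M`, and it differs from `N` by a multiple of `M`
(i.e. it is the orthogonal projection of `N` away from the span of `M`). -/
theorem stmt_3 (Λ : ℝ) (hΛ : Λ ≠ 0) (M : Matrix (Fin 3) (Fin 3) ℝ) (hM : M.PosDef)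
    (htr : hM.posSemidef.sqrt.trace = |Λ|)
    (G : Matrix (Fin 3) (Fin 3) ℝ → Matrix (Fin 3) (Fin 3) ℝ)
    (hG : ∀ N : Matrix (Fin 3) (Fin 3) ℝ, N.IsHermitian →
      (G N).IsHermitian ∧
      G N * (hM.posSemidef.sqrt)⁻¹ + (hM.posSemidef.sqrt)⁻¹ * G N = -(M⁻¹ * N * M⁻¹)) :
    G M = -(1 / 2 : ℝ) • (hM.posSemidef.sqrt)⁻¹ ∧
    -(G M * M).trace = |Λ| / 2 ∧
    (∀ N : Matrix (Fin 3) (Fin 3) ℝ, N.IsHermitian →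
      -(G M * (N - ((1 / |Λ|) * ((hM.posSemidef.sqrt)⁻¹ * N).trace) • M)).trace = 0 ∧
      ∃ c : ℝ, N - (N - ((1 / |Λ|) * ((hM.posSemidef.sqrt)⁻¹ * N).trace) • M) = c • M) := by
  set S := hM.posSemidef.sqrt with hSdef
  have hSS : S * S = M := hM.posSemidef.sqrt_mul_self
  have hdetM : M.det ≠ 0 := hM.det_pos.ne'
  have hdetS : S.det ≠ 0 := by
    intro h0; apply hdetM; rw [← hSS, Matrix.det_mul, h0, mul_zero]
  have hSinv_psd : (S⁻¹).PosSemidef := hM.posSemidef.posSemidef_sqrt.inv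
  have hdetSinv : (S⁻¹).det ≠ 0 := by
    have h1 : S⁻¹ * S = 1 := Matrix.nonsing_inv_mul _ hdetS.isUnit
    intro h0
    have h2 := congrArg Matrix.det h1
    rw [Matrix.det_mul, h0, zero_mul, Matrix.det_one] at h2
    exact zero_ne_one h2
  have hMinv : S⁻¹ * S⁻¹ = M⁻¹ := by rw [← hSS, Matrix.mul_inv_rev]
  obtain ⟨hGh, hGe⟩ := hG M hM.1
  set C : Matrix (Fin 3) (Fin 3) ℝ := -(1 / 2 : ℝ) • S⁻¹ with hCdef
  have hCherm : C.IsHermitian := by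
    show Cᴴ = C
    rw [hCdef, Matrix.conjTranspose_smul, hSinv_psd.1.eq]
    simp
  have hCeq : C * S⁻¹ + S⁻¹ * C = -(M⁻¹ * M * M⁻¹) := by
    rw [Matrix.nonsing_inv_mul _ hdetM.isUnit, one_mul, ← hMinv, hCdef,
      smul_mul_assoc, mul_smul_comm, ← add_smul]
    norm_num
  have hD : G M = C := by
    have heq : (G M - C) * S⁻¹ + S⁻¹ * (G M - C) = 0 := by
      have e : (G M - C) * S⁻¹ + S⁻¹ * (G M - C)
          = (G M * S⁻¹ + S⁻¹ * G M) - (C * S⁻¹ + S⁻¹ * C) := by noncomm_ring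
      rw [e, hGe, hCeq, sub_self]
    have h0 := sylvester_unique hSinv_psd hdetSinv (hGh.sub hCherm) heq
    exact sub_eq_zero.mp h0
  have hSinvM : S⁻¹ * M = S := by
    rw [← hSS, ← Matrix.mul_assoc, Matrix.nonsing_inv_mul _ hdetS.isUnit, one_mul]
  have hΛ' : |Λ| ≠ 0 := abs_ne_zero.mpr hΛ
  refine ⟨hD, ?_, ?_⟩
  · rw [hD, hCdef, smul_mul_assoc, hSinvM, Matrix.trace_smul, htr]
    simp [smul_eq_mul]
    ring
  · intro N hN
    constructor
    · have e : S⁻¹ * (N - ((1 / |Λ|) * (S⁻¹ * N).trace) • M)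
          = S⁻¹ * N - ((1 / |Λ|) * (S⁻¹ * N).trace) • S := by
        rw [mul_sub, mul_smul_comm, hSinvM]
      rw [hD, hCdef, smul_mul_assoc, e, Matrix.trace_smul, Matrix.trace_sub,
        Matrix.trace_smul, htr]
      simp only [smul_eq_mul]
      field_simp
      ring
    · exact ⟨(1 / |Λ|) * ((S⁻¹ * N).trace), by rw [sub_sub_cancel]⟩
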